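/- arXiv:1508.01165 — 3 statements merged into one kernel-verified Lean document; each statement's English description precedes it below -/
import Mathlib

section
/- Let Ω ⊂ ℝ³ be a bounded open set, let α, β ∈ ℝ with α ≥ −1/2, and let 1 ≤ p ≤ ∞ with conjugate exponent p' (1/p + 1/p' = 1). There exists a constant C, independent of K, h, x₀ and f (C may depend on Ω, α, β and p), such that for every continuously differentiable function f : ℝ³ → ℝ with compact support contained in Ω, every x₀ ∈ Ω, every h > 0 and every K ≥ 1: ‖σ^α f‖²_{L²(Ω)} ≤ C ‖σ^{α−β} f‖_{L^p(Ω)} · ‖σ^{α+1+β} ∇f‖_{L^{p'}(Ω)}. -/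
open MeasureTheory Real
open scoped ENNReal NNReal

set_option maxHeartbeats 1000000

private lemma wgn_sum_single (y : EuclideanSpace ℝ (Fin 3)) :
    ∑ i : Fin 3, y i • EuclideanSpace.single i (1:ℝ) = y := by
  have := (EuclideanSpace.basisFun (Fin 3) ℝ).sum_repr y
  simpa [EuclideanSpace.basisFun_apply, EuclideanSpace.basisFun_repr] using this

private lemma wgn_core (f : EuclideanSpace ℝ (Fin 3) → ℝ) (hf : ContDiff ℝ 1 f)
    (hfc : HasCompactSupport f) (x₀ : EuclideanSpace ℝ (Fin 3)) {c : ℝ} (hc : 0 < c)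
    {α : ℝ} (hα : -(1/2 : ℝ) ≤ α) :
    ∫ x, (‖x - x₀‖ ^ 2 + c) ^ α * (f x * f x) ≤
      ∫ x, (‖x - x₀‖ ^ 2 + c) ^ (α + 1/2) * (|f x| * ‖fderiv ℝ f x‖) := by
  set w : EuclideanSpace ℝ (Fin 3) → ℝ := fun x => ‖x - x₀‖ ^ 2 + c with hw
  have hw0 : ∀ x, 0 < w x := fun x => by positivity
  set F' : EuclideanSpace ℝ (Fin 3) → EuclideanSpace ℝ (Fin 3) →L[ℝ] ℝ := fderiv ℝ f with hF'
  have hfd : ∀ x, HasFDerivAt f (F' x) x := fun x => (hf.differentiable one_ne_zero x).hasFDerivAt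
  have hF'c : Continuous F' := hf.continuous_fderiv one_ne_zero
  have hfcon : Continuous f := hf.continuous
  have hwc : Continuous w := by
    apply Continuous.add _ continuous_const
    exact (continuous_id.sub continuous_const).norm.pow 2
  have hwr : ∀ r : ℝ, Continuous fun x => w x ^ r :=
    fun r => hwc.rpow_const (fun x => Or.inl (hw0 x).ne')
  set Wd : EuclideanSpace ℝ (Fin 3) → EuclideanSpace ℝ (Fin 3) →L[ℝ] ℝ :=
    fun x => (2:ℝ) • (innerSL ℝ (x - x₀)) with hWdd
  have hWdc : Continuous Wd :=
    Continuous.smul (f := fun _ => (2:ℝ)) (g := fun x => innerSL ℝ (x - x₀))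
      continuous_const ((innerSL ℝ).continuous.comp (continuous_id.sub continuous_const))
  have hwd : ∀ x, HasFDerivAt w (Wd x) x := by
    intro x
    have h1 : HasFDerivAt (fun y : EuclideanSpace ℝ (Fin 3) => y - x₀)
        (ContinuousLinearMap.id ℝ _) x := (hasFDerivAt_id x).sub_const x₀
    have h2 := ((h1.inner ℝ h1).add_const c)
    have h3 : (fun y : EuclideanSpace ℝ (Fin 3) =>
        (inner ℝ (y - x₀) (y - x₀) : ℝ) + c) = w := by
      funext y; rw [real_inner_self_eq_norm_sq]
    rw [h3] at h2
    have h4 : ((2:ℝ) • (innerSL ℝ (x - x₀)) : EuclideanSpace ℝ (Fin 3) →L[ℝ] ℝ)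
        = (fderivInnerCLM ℝ (x - x₀, x - x₀)).comp
          ((ContinuousLinearMap.id ℝ (EuclideanSpace ℝ (Fin 3))).prod
            (ContinuousLinearMap.id ℝ (EuclideanSpace ℝ (Fin 3)))) := by
      ext v
      simp only [ContinuousLinearMap.smul_apply, innerSL_apply_apply, ContinuousLinearMap.comp_apply,
        ContinuousLinearMap.prod_apply, ContinuousLinearMap.id_apply, fderivInnerCLM_apply,
        smul_eq_mul]
      rw [real_inner_comm v (x - x₀)]
      ring
    show HasFDerivAt w ((2:ℝ) • (innerSL ℝ (x - x₀))) x
    rw [h4]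
    exact h2
  set G : EuclideanSpace ℝ (Fin 3) → ℝ := fun x => w x ^ α * (f x * f x) with hG
  set Gd : EuclideanSpace ℝ (Fin 3) → EuclideanSpace ℝ (Fin 3) →L[ℝ] ℝ := fun x =>
      (w x ^ α) • (f x • F' x + f x • F' x) + (f x * f x) • ((α * w x ^ (α - 1)) • Wd x) with hGdd
  have hGd : ∀ x, HasFDerivAt G (Gd x) x := fun x =>
    ((hwd x).rpow_const (Or.inl (hw0 x).ne')).mul ((hfd x).mul (hfd x))
  have hGc : Continuous G := (hwr α).mul (hfcon.mul hfcon)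
  have hGdc : Continuous Gd :=
    (((hwr α).smul ((hfcon.smul hF'c).add (hfcon.smul hF'c))).add
      ((hfcon.mul hfcon).smul ((continuous_const.mul (hwr (α-1))).smul hWdc)))
  have hGdzero : ∀ x, f x = 0 → ∀ v, Gd x v = 0 := by
    intro x hx v
    simp [hGdd, hx]
  have hint : ∀ {g : EuclideanSpace ℝ (Fin 3) → ℝ}, Continuous g →
      (∀ x, f x = 0 → g x = 0) → Integrable g volume := by
    intro g hg hsupp
    apply hg.integrable_of_hasCompactSupport
    exact HasCompactSupport.intro hfc fun x hx => hsupp x (image_eq_zero_of_notMem_tsupport hx)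
  have hfzG : ∀ x, f x = 0 → G x = 0 := fun x hx => by simp [hG, hx]
  -- integration by parts in each coordinate direction
  have key : ∀ i : Fin 3,
      (∫ x, ((x : EuclideanSpace ℝ (Fin 3)) i - x₀ i) * Gd x (EuclideanSpace.single i 1))
        = - ∫ x, G x := by
    intro i
    have hφ : ∀ x : EuclideanSpace ℝ (Fin 3),
        HasFDerivAt (fun y : EuclideanSpace ℝ (Fin 3) => y i - x₀ i)
        (EuclideanSpace.proj i : EuclideanSpace ℝ (Fin 3) →L[ℝ] ℝ) x := by
      intro x
      exact ((EuclideanSpace.proj i : EuclideanSpace ℝ (Fin 3) →L[ℝ] ℝ).hasFDerivAt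
        (x := x)).sub_const (x₀ i)
    have H := integral_bilinear_hasFDerivAt_right_eq_neg_left_of_integrable
        (μ := volume) (B := ContinuousLinearMap.mul ℝ ℝ)
        (f := fun y : EuclideanSpace ℝ (Fin 3) => y i - x₀ i)
        (f' := fun _ => (EuclideanSpace.proj i : EuclideanSpace ℝ (Fin 3) →L[ℝ] ℝ))
        (g := G) (g' := Gd) (v := EuclideanSpace.single i 1)
        ?_ ?_ ?_ (fun x _ => hφ x) (fun x _ => hGd x)
    · have hproj : (EuclideanSpace.proj i : EuclideanSpace ℝ (Fin 3) →L[ℝ] ℝ)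
          (EuclideanSpace.single i 1) = 1 := by
        simp [EuclideanSpace.single_apply]
      simp only [ContinuousLinearMap.mul_apply', hproj, one_mul] at H
      exact H
    · refine hint (by fun_prop) ?_
      intro x hx
      simp [ContinuousLinearMap.mul_apply', hfzG x hx]
    · simp only [ContinuousLinearMap.mul_apply']
      refine hint ?_ ?_
      · exact ((EuclideanSpace.proj i).continuous.sub continuous_const).mul
          (hGdc.clm_apply continuous_const)
      · intro x hx
        simp [hGdzero x hx]
    · simp only [ContinuousLinearMap.mul_apply']
      refine hint ?_ ?_
      · exact ((EuclideanSpace.proj i).continuous.sub continuous_const).mul hGc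
      · intro x hx
        simp [hfzG x hx]
  have hGdecomp : ∀ x : EuclideanSpace ℝ (Fin 3), Gd x (x - x₀)
      = ∑ i : Fin 3, (x i - x₀ i) * Gd x (EuclideanSpace.single i 1) := by
    intro x
    conv_lhs => rw [← wgn_sum_single (x - x₀)]
    rw [map_sum]
    refine Finset.sum_congr rfl fun i _ => ?_
    rw [_root_.map_smul]
    simp [smul_eq_mul]
  have hint2 : ∀ i : Fin 3, Integrable
      (fun x : EuclideanSpace ℝ (Fin 3) => (x i - x₀ i) * Gd x (EuclideanSpace.single i 1))
      volume := by
    intro i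
    refine hint ?_ ?_
    · exact ((EuclideanSpace.proj i).continuous.sub continuous_const).mul
        (hGdc.clm_apply continuous_const)
    · intro x hx; simp [hGdzero x hx]
  have hTotal : ∫ x, Gd x (x - x₀) = -(3 * ∫ x, G x) := by
    have e1 : (∫ x, Gd x (x - x₀))
        = ∑ i : Fin 3, ∫ x, (x i - x₀ i) * Gd x (EuclideanSpace.single i 1) := by
      rw [← integral_finset_sum _ (fun i _ => hint2 i)]
      congr 1
      funext x
      exact hGdecomp x
    rw [e1]
    simp only [key]
    rw [Fin.sum_univ_three]
    ring
  -- pointwise bound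
  set D : EuclideanSpace ℝ (Fin 3) → ℝ :=
    fun x => w x ^ (α + 1/2) * (|f x| * ‖F' x‖) with hD
  have hDc : Continuous D := (hwr _).mul (hfcon.abs.mul hF'c.norm)
  have hpoint : ∀ x, -(Gd x (x - x₀)) ≤ G x + 2 * D x := by
    intro x
    have e1 : Gd x (x - x₀) = w x ^ α * (2 * (f x * F' x (x - x₀)))
        + (f x * f x) * (α * w x ^ (α-1) * (2 * ‖x - x₀‖^2)) := by
      simp only [hGdd, ContinuousLinearMap.add_apply, ContinuousLinearMap.smul_apply,
        smul_eq_mul, hWdd, innerSL_apply_apply]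
      rw [real_inner_self_eq_norm_sq]
      ring
    have hnorm_le : ‖x - x₀‖ ≤ w x ^ (1/2 : ℝ) := by
      rw [← Real.sqrt_eq_rpow]
      have : ‖x - x₀‖ = Real.sqrt (‖x - x₀‖^2) := by
        rw [Real.sqrt_sq (norm_nonneg _)]
      rw [this]
      apply Real.sqrt_le_sqrt
      simp only [hw]
      nlinarith [norm_nonneg (x - x₀)]
    have hT : |F' x (x - x₀)| ≤ ‖F' x‖ * w x ^ (1/2:ℝ) := by
      calc |F' x (x - x₀)| = ‖F' x (x - x₀)‖ := rfl
        _ ≤ ‖F' x‖ * ‖x - x₀‖ := (F' x).le_opNorm _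
        _ ≤ ‖F' x‖ * w x ^ (1/2:ℝ) :=
            mul_le_mul_of_nonneg_left hnorm_le (norm_nonneg _)
    have hwα : (0:ℝ) ≤ w x ^ α := (Real.rpow_pos_of_pos (hw0 x) _).le
    have hterm1 : -(w x ^ α * (2 * (f x * F' x (x - x₀)))) ≤ 2 * D x := by
      have h1 : -(f x * F' x (x - x₀)) ≤ |f x| * (‖F' x‖ * w x ^ (1/2:ℝ)) := by
        calc -(f x * F' x (x - x₀)) ≤ |f x * F' x (x - x₀)| := neg_le_abs _
          _ = |f x| * |F' x (x - x₀)| := abs_mul _ _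
          _ ≤ |f x| * (‖F' x‖ * w x ^ (1/2:ℝ)) :=
              mul_le_mul_of_nonneg_left hT (abs_nonneg _)
      have h2 : w x ^ α * w x ^ (1/2:ℝ) = w x ^ (α + 1/2) :=
        (Real.rpow_add (hw0 x) _ _).symm
      calc -(w x ^ α * (2 * (f x * F' x (x - x₀))))
          = 2 * (w x ^ α * (-(f x * F' x (x - x₀)))) := by ring
        _ ≤ 2 * (w x ^ α * (|f x| * (‖F' x‖ * w x ^ (1/2:ℝ)))) := by
            have := mul_le_mul_of_nonneg_left h1 hwα
            linarith
        _ = 2 * D x := by simp only [hD]; rw [← h2]; ring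
    have hterm2 : -((f x * f x) * (α * w x ^ (α-1) * (2 * ‖x - x₀‖^2))) ≤ G x := by
      have hf2 : (0:ℝ) ≤ f x * f x := mul_self_nonneg _
      have hwα1 : (0:ℝ) ≤ w x ^ (α - 1) := (Real.rpow_pos_of_pos (hw0 x) _).le
      rcases le_or_gt 0 α with hα0 | hα0
      · have : 0 ≤ (f x * f x) * (α * w x ^ (α-1) * (2 * ‖x - x₀‖^2)) := by positivity
        have hG0 : 0 ≤ G x := by
          rw [hG]; positivity
        linarith
      · have hkey : w x ^ (α - 1) * ‖x - x₀‖^2 ≤ w x ^ α := by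
          have h1 : ‖x - x₀‖^2 ≤ w x := by simp only [hw]; linarith
          have h2 : w x ^ (α - 1) * ‖x - x₀‖^2 ≤ w x ^ (α - 1) * w x :=
            mul_le_mul_of_nonneg_left h1 hwα1
          have h3 : w x ^ (α - 1) * w x = w x ^ α := by
            rw [← Real.rpow_add_one (hw0 x).ne']
            ring_nf
          linarith
        have h2α : -2 * α ≤ 1 := by linarith
        have hexp : -((f x * f x) * (α * w x ^ (α-1) * (2 * ‖x - x₀‖^2)))
            = (f x * f x) * ((-2*α) * (w x ^ (α-1) * ‖x - x₀‖^2)) := by ring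
        rw [hexp, hG]
        have hb : (-2*α) * (w x ^ (α-1) * ‖x - x₀‖^2) ≤ w x ^ α := by
          have hpos : 0 ≤ w x ^ (α-1) * ‖x - x₀‖^2 := by positivity
          calc (-2*α) * (w x ^ (α-1) * ‖x - x₀‖^2) ≤ 1 * (w x ^ (α-1) * ‖x - x₀‖^2) :=
              mul_le_mul_of_nonneg_right h2α hpos
            _ = w x ^ (α-1) * ‖x - x₀‖^2 := one_mul _
            _ ≤ w x ^ α := hkey
        calc (f x * f x) * ((-2*α) * (w x ^ (α-1) * ‖x - x₀‖^2))
            ≤ (f x * f x) * (w x ^ α) := mul_le_mul_of_nonneg_left hb hf2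
          _ = w x ^ α * (f x * f x) := by ring
      -- end cases
    rw [e1]
    linarith
  have hintL : Integrable (fun x => -(Gd x (x - x₀))) volume := by
    refine (hint ?_ ?_).neg
    · exact hGdc.clm_apply (continuous_id.sub continuous_const)
    · intro x hx; simp [hGdzero x hx]
  have hintG : Integrable G volume := hint hGc hfzG
  have hintD : Integrable D volume := by
    refine hint hDc ?_
    intro x hx; simp [hD, hx]
  have hmono : ∫ x, -(Gd x (x - x₀)) ≤ ∫ x, (G x + 2 * D x) :=
    integral_mono hintL (hintG.add (hintD.const_mul 2)) hpoint
  have hsplit : ∫ x, (G x + 2 * D x) = (∫ x, G x) + 2 * ∫ x, D x := by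
    rw [integral_add hintG (hintD.const_mul 2), integral_const_mul]
  have hneg : ∫ x, -(Gd x (x - x₀)) = 3 * ∫ x, G x := by
    rw [integral_neg, hTotal]; ring
  have : ∫ x, G x ≤ ∫ x, D x := by
    rw [hneg, hsplit] at hmono
    linarith
  exact this

/-- Lemma 3.4: weighted Gagliardo–Nirenberg-type interpolation inequality in ℝ³ for
    the weight σ(x) = sqrt(|x−x₀|² + K²h²):
    ‖σ^α f‖²_{L²(Ω)} ≤ C ‖σ^{α−β} f‖_{L^p(Ω)} ‖σ^{α+1+β} ∇f‖_{L^{p'}(Ω)}. -/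
theorem weighted_gagliardo_nirenberg (Ω : Set (EuclideanSpace ℝ (Fin 3)))
    (hΩo : IsOpen Ω) (hΩb : Bornology.IsBounded Ω)
    (α β : ℝ) (hα : -(1/2 : ℝ) ≤ α) (p p' : ℝ≥0∞) (hp : 1 ≤ p)
    (hpp' : 1 / p + 1 / p' = 1) :
    ∃ C : ℝ, 0 < C ∧
      ∀ (f : EuclideanSpace ℝ (Fin 3) → ℝ), ContDiff ℝ 1 f → HasCompactSupport f →
        tsupport f ⊆ Ω →
      ∀ x₀ ∈ Ω, ∀ h : ℝ, 0 < h → ∀ K : ℝ, 1 ≤ K →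
        let σ : EuclideanSpace ℝ (Fin 3) → ℝ :=
          fun x => Real.sqrt (‖x - x₀‖ ^ 2 + K ^ 2 * h ^ 2)
        (eLpNorm (fun x => σ x ^ α * f x) 2 (volume.restrict Ω)) ^ 2 ≤
          ENNReal.ofReal C *
            eLpNorm (fun x => σ x ^ (α - β) * f x) p (volume.restrict Ω) *
            eLpNorm (fun x => σ x ^ (α + 1 + β) * ‖fderiv ℝ f x‖) p'
              (volume.restrict Ω) := by
  refine ⟨1, one_pos, ?_⟩
  intro f hf hfc hfΩ x₀ hx₀ h hh K hK
  intro σ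
  have hc : (0:ℝ) < K ^ 2 * h ^ 2 := by positivity
  set w : EuclideanSpace ℝ (Fin 3) → ℝ := fun x => ‖x - x₀‖ ^ 2 + K ^ 2 * h ^ 2 with hw
  have hw0 : ∀ x, 0 < w x := fun x => by positivity
  have hσ : ∀ (r : ℝ) (x : EuclideanSpace ℝ (Fin 3)), σ x ^ r = w x ^ (r / 2) := by
    intro r x
    show Real.sqrt (w x) ^ r = w x ^ (r / 2)
    rw [Real.sqrt_eq_rpow, ← Real.rpow_mul (hw0 x).le]
    congr 1
    ring
  simp only [hσ]
  rw [ENNReal.ofReal_one, one_mul]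
  -- notation
  set ν := volume.restrict Ω with hν
  have hfcon : Continuous f := hf.continuous
  have hF'c : Continuous fun x => ‖fderiv ℝ f x‖ := (hf.continuous_fderiv one_ne_zero).norm
  have hwc : Continuous w := by
    apply Continuous.add _ continuous_const
    exact (continuous_id.sub continuous_const).norm.pow 2
  have hwr : ∀ r : ℝ, Continuous fun x => w x ^ r :=
    fun r => hwc.rpow_const (fun x => Or.inl (hw0 x).ne')
  set G : EuclideanSpace ℝ (Fin 3) → ℝ := fun x => w x ^ α * (f x * f x) with hG
  set D : EuclideanSpace ℝ (Fin 3) → ℝ :=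
    fun x => w x ^ (α + 1/2) * (|f x| * ‖fderiv ℝ f x‖) with hD
  have hGc : Continuous G := (hwr α).mul (hfcon.mul hfcon)
  have hDc : Continuous D := (hwr _).mul (hfcon.abs.mul hF'c)
  have hfz : ∀ x, x ∉ Ω → f x = 0 := fun x hx =>
    image_eq_zero_of_notMem_tsupport (fun hmem => hx (hfΩ hmem))
  have hint : ∀ {g : EuclideanSpace ℝ (Fin 3) → ℝ}, Continuous g →
      (∀ x, f x = 0 → g x = 0) → Integrable g volume := by
    intro g hg hsupp
    apply hg.integrable_of_hasCompactSupport
    exact HasCompactSupport.intro hfc fun x hx => hsupp x (image_eq_zero_of_notMem_tsupport hx)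
  have hGint : Integrable G volume := hint hGc (fun x hx => by simp [hG, hx])
  have hDint : Integrable D volume := hint hDc (fun x hx => by simp [hD, hx])
  set u : EuclideanSpace ℝ (Fin 3) → ℝ := fun x => w x ^ ((α - β)/2) * f x with hu
  set v : EuclideanSpace ℝ (Fin 3) → ℝ :=
    fun x => w x ^ ((α + 1 + β)/2) * ‖fderiv ℝ f x‖ with hv
  have huc : Continuous u := (hwr _).mul hfcon
  have hvc : Continuous v := (hwr _).mul hF'c
  -- Step A : LHS squared is lintegral of ofReal G
  have hpt : ∀ x, ((‖w x ^ (α/2) * f x‖₊ : ℝ≥0∞)) ^ (2:ℝ) = ENNReal.ofReal (G x) := by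
    intro x
    have h1 : ((‖w x ^ (α/2) * f x‖₊ : ℝ≥0∞)) = ENNReal.ofReal (|w x ^ (α/2) * f x|) :=
      Real.enorm_eq_ofReal_abs _
    rw [h1, ENNReal.ofReal_rpow_of_nonneg (abs_nonneg _) (by norm_num)]
    congr 1
    rw [Real.rpow_two, sq_abs, hG]
    have h2 : (w x ^ (α/2)) ^ (2:ℕ) = w x ^ α := by
      rw [← Real.rpow_natCast (w x ^ (α/2)) 2, ← Real.rpow_mul (hw0 x).le]
      norm_num
    calc (w x ^ (α/2) * f x) ^ 2 = (w x ^ (α/2)) ^ (2:ℕ) * (f x * f x) := by ring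
      _ = w x ^ α * (f x * f x) := by rw [h2]
  have stepA : (eLpNorm (fun x => w x ^ (α/2) * f x) 2 ν) ^ 2
      = ∫⁻ x, ENNReal.ofReal (G x) ∂ν := by
    calc (eLpNorm (fun x => w x ^ (α/2) * f x) 2 ν) ^ 2
        = ((∫⁻ x, ((‖w x ^ (α/2) * f x‖₊ : ℝ≥0∞)) ^ (2:ℝ) ∂ν) ^ (1/(2:ℝ))) ^ (2:ℕ) := by
          rw [eLpNorm_eq_lintegral_rpow_enorm_toReal two_ne_zero ENNReal.ofNat_ne_top]
          norm_num
          rfl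
      _ = ∫⁻ x, ((‖w x ^ (α/2) * f x‖₊ : ℝ≥0∞)) ^ (2:ℝ) ∂ν := by
          rw [← ENNReal.rpow_natCast _ 2, ← ENNReal.rpow_mul]
          norm_num
      _ = ∫⁻ x, ENNReal.ofReal (G x) ∂ν := lintegral_congr hpt
  -- Step B
  have stepB : ∫⁻ x, ENNReal.ofReal (G x) ∂ν = ENNReal.ofReal (∫ x, G x) := by
    rw [hν, ← ofReal_integral_eq_lintegral_ofReal hGint.restrict
      (Filter.Eventually.of_forall fun x => by
        simp only [hG]
        exact mul_nonneg (Real.rpow_pos_of_pos (hw0 x) _).le (mul_self_nonneg _))]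
    congr 1
    exact setIntegral_eq_integral_of_forall_compl_eq_zero fun x hx => by simp [hG, hfz x hx]
  have stepD : ∫⁻ x, ENNReal.ofReal (D x) ∂ν = ENNReal.ofReal (∫ x, D x) := by
    rw [hν, ← ofReal_integral_eq_lintegral_ofReal hDint.restrict
      (Filter.Eventually.of_forall fun x => by
        simp only [hD]
        exact mul_nonneg (Real.rpow_pos_of_pos (hw0 x) _).le
          (mul_nonneg (abs_nonneg _) (norm_nonneg _)))]
    congr 1
    exact setIntegral_eq_integral_of_forall_compl_eq_zero fun x hx => by simp [hD, hfz x hx]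
  -- Step C : the core inequality
  have stepC : (∫ x, G x) ≤ ∫ x, D x := wgn_core f hf hfc x₀ hc hα
  -- Step E : ofReal D = enorm (u * v)
  have stepE : ∀ x, ENNReal.ofReal (D x) = (‖u x * v x‖₊ : ℝ≥0∞) := by
    intro x
    rw [← enorm_eq_nnnorm, Real.enorm_eq_ofReal_abs]
    congr 1
    have hw1 : (0:ℝ) ≤ w x ^ ((α - β)/2) := (Real.rpow_pos_of_pos (hw0 x) _).le
    have hw2 : (0:ℝ) ≤ w x ^ ((α + 1 + β)/2) := (Real.rpow_pos_of_pos (hw0 x) _).le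
    have hmul : w x ^ ((α - β)/2) * w x ^ ((α + 1 + β)/2) = w x ^ (α + 1/2) := by
      rw [← Real.rpow_add (hw0 x)]
      ring_nf
    rw [hD, hu, hv]
    rw [abs_mul, abs_mul, abs_mul, abs_of_nonneg hw1, abs_of_nonneg hw2, abs_norm]
    calc w x ^ (α + 1/2) * (|f x| * ‖fderiv ℝ f x‖)
        = (w x ^ ((α - β)/2) * w x ^ ((α + 1 + β)/2)) * (|f x| * ‖fderiv ℝ f x‖) := by
          rw [hmul]
      _ = w x ^ ((α - β)/2) * |f x| * (w x ^ ((α + 1 + β)/2) * ‖fderiv ℝ f x‖) := by ring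
  -- Step G : Hölder
  have stepG : eLpNorm (fun x => u x * v x) 1 ν ≤ eLpNorm u p ν * eLpNorm v p' ν := by
    have hH : ENNReal.HolderTriple p p' 1 := ⟨by simpa [one_div] using hpp'⟩
    have := eLpNorm_le_eLpNorm_mul_eLpNorm_of_nnnorm (huc.aestronglyMeasurable (μ := ν))
      (hvc.aestronglyMeasurable (μ := ν)) (· * ·) 1
      (Filter.Eventually.of_forall fun x => by simp [nnnorm_mul]) (hpqr := hH)
    simpa using this
  calc (eLpNorm (fun x => w x ^ (α/2) * f x) 2 ν) ^ 2
      = ENNReal.ofReal (∫ x, G x) := by rw [stepA, stepB]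
    _ ≤ ENNReal.ofReal (∫ x, D x) := ENNReal.ofReal_le_ofReal stepC
    _ = ∫⁻ x, ENNReal.ofReal (D x) ∂ν := stepD.symm
    _ = ∫⁻ x, (‖u x * v x‖₊ : ℝ≥0∞) ∂ν := by
        apply lintegral_congr
        exact stepE
    _ = eLpNorm (fun x => u x * v x) 1 ν := (eLpNorm_one_eq_lintegral_enorm (f := fun x => u x * v x)).symm
    _ ≤ eLpNorm u p ν * eLpNorm v p' ν := stepG
end

section
/- Let M ≥ 1, let 0 = t₀ < t₁ < ⋯ < t_M = T be a partition of (0, T] with time steps k_m = t_m − t_{m−1} and subintervals I_m = (t_{m−1}, t_m], let A ≥ 0, and let g : (0, T] → [0, ∞) be a measurable function satisfying g(t) ≤ A / t_m for all t ∈ I_m and all m = 1, …, M. Then ∫₀^T g(t) dt ≤ A · (1 + log(T / k₁)). -/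
open MeasureTheory Real

/-- Analytic core of Lemma 5.2: if a nonnegative measurable g satisfies
    g(t) ≤ A / t_m on each subinterval I_m = (t_{m−1}, t_m] of a partition
    0 = t₀ < ⋯ < t_M = T, then ∫₀^T g ≤ A (1 + log(T / k₁)). -/
theorem integral_bound_from_smoothing (M : ℕ) (hM : 1 ≤ M) (t : ℕ → ℝ)
    (ht0 : t 0 = 0) (hmono : ∀ m < M, t m < t (m + 1))
    (A : ℝ) (hA : 0 ≤ A) (g : ℝ → ℝ) (hmeas : Measurable g)
    (hg0 : ∀ s ∈ Set.Ioc (0 : ℝ) (t M), 0 ≤ g s)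
    (hbound : ∀ m < M, ∀ s ∈ Set.Ioc (t m) (t (m + 1)), g s ≤ A / t (m + 1)) :
    ∫ s in Set.Ioc (0 : ℝ) (t M), g s ≤
      A * (1 + Real.log (t M / (t 1 - t 0))) := by
  -- monotonicity of t on [0, M]
  have hle : ∀ i j, i ≤ j → j ≤ M → t i ≤ t j := by
    intro i j hij hjM
    induction j with
    | zero => rw [Nat.le_zero.mp hij]
    | succ n ih =>
      rcases Nat.eq_or_lt_of_le hij with h | h
      · rw [h]
      · exact le_trans (ih (Nat.lt_succ_iff.mp h) (by omega))
          (le_of_lt (hmono n (by omega)))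
  have hpos : ∀ m, m ≤ M → 1 ≤ m → 0 < t m := by
    intro m hmM h1m
    have h1 : 0 < t 1 := ht0 ▸ hmono 0 (by omega)
    exact lt_of_lt_of_le h1 (hle 1 m h1m hmM)
  -- integrability on each subinterval
  have hint : ∀ m, m < M → IntegrableOn g (Set.Ioc (t m) (t (m + 1))) := by
    intro m hm
    have hsub : Set.Ioc (t m) (t (m + 1)) ⊆ Set.Ioc (0 : ℝ) (t M) :=
      Set.Ioc_subset_Ioc (by rw [← ht0]; exact hle 0 m (by omega) (by omega))
        (hle (m + 1) M (by omega) le_rfl)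
    refine Integrable.mono' (g := fun _ => A / t (m + 1))
      ((integrableOn_const_iff).mpr (Or.inr measure_Ioc_lt_top))
      hmeas.aestronglyMeasurable.restrict ?_
    rw [ae_restrict_iff' measurableSet_Ioc]
    filter_upwards with x hx
    rw [Real.norm_eq_abs, abs_of_nonneg (hg0 x (hsub hx))]
    exact hbound m hm x hx
  -- bound on each piece
  have hpiece : ∀ m, m < M →
      ∫ s in Set.Ioc (t m) (t (m + 1)), g s ≤ (t (m + 1) - t m) * (A / t (m + 1)) := by
    intro m hm
    have h1 : ∫ s in Set.Ioc (t m) (t (m + 1)), g s ≤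
        ∫ _ in Set.Ioc (t m) (t (m + 1)), A / t (m + 1) :=
      setIntegral_mono_on (hint m hm)
        ((integrableOn_const_iff).mpr (Or.inr measure_Ioc_lt_top))
        measurableSet_Ioc (fun x hx => hbound m hm x hx)
    calc ∫ s in Set.Ioc (t m) (t (m + 1)), g s
        ≤ ∫ _ in Set.Ioc (t m) (t (m + 1)), A / t (m + 1) := h1
      _ = (t (m + 1) - t m) * (A / t (m + 1)) := by
          rw [setIntegral_const, Real.volume_real_Ioc_of_le (le_of_lt (hmono m hm)), smul_eq_mul]
  -- decompose the integral
  have hdecomp : ∫ s in Set.Ioc (0 : ℝ) (t M), g s =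
      ∑ m ∈ Finset.range M, ∫ s in Set.Ioc (t m) (t (m + 1)), g s := by
    have hI : ∀ k < M, IntervalIntegrable g volume (t k) (t (k + 1)) := fun k hk =>
      (intervalIntegrable_iff_integrableOn_Ioc_of_le (le_of_lt (hmono k hk))).mpr (hint k hk)
    have := intervalIntegral.sum_integral_adjacent_intervals hI
    have h2 : ∀ m < M, (∫ s in (t m)..(t (m + 1)), g s) =
        ∫ s in Set.Ioc (t m) (t (m + 1)), g s := fun m hm =>
      intervalIntegral.integral_of_le (le_of_lt (hmono m hm))
    have h0M : t 0 ≤ t M := hle 0 M (by omega) le_rfl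
    rw [intervalIntegral.integral_of_le h0M, ht0] at this
    rw [← this]
    exact Finset.sum_congr rfl (fun m hm => h2 m (Finset.mem_range.mp hm))
  rw [hdecomp]
  -- sum bound
  obtain ⟨N, rfl⟩ : ∃ N, M = N + 1 := ⟨M - 1, (Nat.succ_pred_eq_of_pos hM).symm⟩
  rw [Finset.sum_range_succ']
  have h1pos : 0 < t 1 := ht0 ▸ hmono 0 (by omega)
  have hb0 : (t 1 - t 0) * (A / t 1) = A := by
    rw [ht0, sub_zero]; field_simp
  have hbm : ∀ i ∈ Finset.range N,
      (t (i + 2) - t (i + 1)) * (A / t (i + 2)) ≤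
        A * (Real.log (t (i + 2)) - Real.log (t (i + 1))) := by
    intro i hi
    have hiN := Finset.mem_range.mp hi
    have hp1 : 0 < t (i + 1) := hpos (i + 1) (by omega) (by omega)
    have hp2 : 0 < t (i + 2) := hpos (i + 2) (by omega) (by omega)
    have hlog : Real.log (t (i + 1) / t (i + 2)) ≤ t (i + 1) / t (i + 2) - 1 :=
      Real.log_le_sub_one_of_pos (div_pos hp1 hp2)
    rw [Real.log_div (ne_of_gt hp1) (ne_of_gt hp2)] at hlog
    have key : (t (i + 2) - t (i + 1)) / t (i + 2) ≤
        Real.log (t (i + 2)) - Real.log (t (i + 1)) := by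
      have : (t (i + 2) - t (i + 1)) / t (i + 2) = 1 - t (i + 1) / t (i + 2) := by
        field_simp
      linarith [hlog, this.le, this.ge]
    calc (t (i + 2) - t (i + 1)) * (A / t (i + 2))
        = A * ((t (i + 2) - t (i + 1)) / t (i + 2)) := by ring
      _ ≤ A * (Real.log (t (i + 2)) - Real.log (t (i + 1))) :=
          mul_le_mul_of_nonneg_left key hA
  have hsum : ∑ i ∈ Finset.range N, (t (i + 1 + 1) - t (i + 1)) * (A / t (i + 1 + 1)) ≤
      A * (Real.log (t (N + 1)) - Real.log (t 1)) := by
    calc ∑ i ∈ Finset.range N, (t (i + 1 + 1) - t (i + 1)) * (A / t (i + 1 + 1))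
        ≤ ∑ i ∈ Finset.range N, A * (Real.log (t (i + 2)) - Real.log (t (i + 1))) :=
          Finset.sum_le_sum hbm
      _ = A * ∑ i ∈ Finset.range N, (Real.log (t (i + 1 + 1)) - Real.log (t (i + 1))) := by
          rw [Finset.mul_sum]
      _ = A * (Real.log (t (N + 1)) - Real.log (t 1)) := by
          rw [Finset.sum_range_sub (fun i => Real.log (t (i + 1)))]
  have hlogdiv : Real.log (t (N + 1) / (t 1 - t 0)) =
      Real.log (t (N + 1)) - Real.log (t 1) := by
    rw [ht0, sub_zero, Real.log_div (ne_of_gt (hpos (N + 1) le_rfl (by omega)))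
      (ne_of_gt h1pos)]
  calc (∑ i ∈ Finset.range N, ∫ s in Set.Ioc (t (i + 1)) (t (i + 1 + 1)), g s)
        + ∫ s in Set.Ioc (t 0) (t (0 + 1)), g s
      ≤ ∑ i ∈ Finset.range N, (t (i + 1 + 1) - t (i + 1)) * (A / t (i + 1 + 1))
        + (t 1 - t 0) * (A / t 1) := by
        gcongr with i hi
        · exact hpiece (i + 1) (by have := Finset.mem_range.mp hi; omega)
        · exact hpiece 0 (by omega)
    _ ≤ A * (Real.log (t (N + 1)) - Real.log (t 1)) + A := by
        rw [hb0]; exact add_le_add_left hsum A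
    _ = A * (1 + Real.log (t (N + 1) / (t 1 - t 0))) := by rw [hlogdiv]; ring
end

section
/- Let q ≥ 0 be an integer. There exists a constant C, depending only on q, such that for all real numbers a < b and every point t̃ ∈ (a, b) there is a continuously differentiable function θ : ℝ → ℝ whose support is contained in the open interval (a, b), satisfying ∫_a^b θ(t) p(t) dt = p(t̃) for every real polynomial p of degree at most q, and ‖θ‖_{L¹(a,b)} ≤ C. -/
open MeasureTheory Real Polynomial
noncomputable section
namespace RTD
-- assume previous defs; copy minimal
def bump : ContDiffBump ((1:ℝ)/2) := ⟨1/4, 1/3, by norm_num, by norm_num⟩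
def w : ℝ → ℝ := fun t => bump t
lemma w_contDiff : ContDiff ℝ 1 w := bump.contDiff
lemma w_compact : HasCompactSupport w := bump.hasCompactSupport
lemma w_nonneg (t : ℝ) : 0 ≤ w t := bump.nonneg
lemma w_eq_one {t : ℝ} (ht : t ∈ Set.Ioo ((1:ℝ)/4) (3/4)) : w t = 1 := by
  apply bump.one_of_mem_closedBall
  rw [Real.closedBall_eq_Icc]
  have h1 := ht.1; have h2 := ht.2
  have : bump.rIn = 1/4 := rfl
  constructor <;> rw [this] <;> linarith
lemma w_le_one (t : ℝ) : w t ≤ 1 := bump.le_one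
lemma w_tsupport : tsupport w ⊆ Set.Icc ((1:ℝ)/6) (5/6) := by
  have : tsupport w = Metric.closedBall ((1:ℝ)/2) (1/3) := bump.tsupport_eq
  rw [this, Real.closedBall_eq_Icc]
  norm_num
lemma integrable_w_mul (g : ℝ → ℝ) (hg : Continuous g) :
    Integrable (fun t => w t * g t) :=
  (w_contDiff.continuous.mul hg).integrable_of_hasCompactSupport
    (w_compact.mul_right)
def G (q : ℕ) : Matrix (Fin (q+1)) (Fin (q+1)) ℝ :=
  fun i j => ∫ t : ℝ, w t * t ^ ((i : ℕ) + (j : ℕ))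

lemma G_det_ne_zero (q : ℕ) : (G q).det ≠ 0 := by
  intro hdet
  obtain ⟨v, hv, hGv⟩ := (Matrix.exists_mulVec_eq_zero_iff).2 hdet
  -- the polynomial with coefficients v
  set P : Polynomial ℝ := ∑ i : Fin (q+1), Polynomial.C (v i) * Polynomial.X ^ (i : ℕ) with hP
  have hPeval : ∀ t : ℝ, P.eval t = ∑ i : Fin (q+1), v i * t ^ (i : ℕ) := by
    intro t; simp [hP, Polynomial.eval_finset_sum]
  -- F := w * P^2 has integral vᵀ G v = 0
  set F : ℝ → ℝ := fun t => w t * (P.eval t)^2 with hF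
  have hFcont : Continuous F := w_contDiff.continuous.mul (by continuity)
  have hFint : Integrable F := integrable_w_mul _ (by continuity)
  have hFval : ∫ t : ℝ, F t = ∑ i : Fin (q+1), ∑ j : Fin (q+1), v i * v j * G q i j := by
    have : ∀ t : ℝ, F t = ∑ i : Fin (q+1), ∑ j : Fin (q+1),
        v i * v j * (w t * t ^ ((i:ℕ) + (j:ℕ))) := by
      intro t
      show w t * (P.eval t)^2 = _
      rw [hPeval, sq, Finset.sum_mul_sum]
      rw [Finset.mul_sum]
      refine Finset.sum_congr rfl fun i _ => ?_
      rw [Finset.mul_sum]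
      refine Finset.sum_congr rfl fun j _ => ?_
      rw [pow_add]; ring
    rw [MeasureTheory.integral_congr_ae (Filter.Eventually.of_forall this)]
    rw [MeasureTheory.integral_finset_sum]
    · refine Finset.sum_congr rfl fun i _ => ?_
      rw [MeasureTheory.integral_finset_sum]
      · refine Finset.sum_congr rfl fun j _ => ?_
        rw [MeasureTheory.integral_const_mul]; rfl
      · intro j _
        exact (integrable_w_mul (fun t => t ^ ((i:ℕ)+(j:ℕ))) (by continuity)).const_mul _
    · intro i _
      apply MeasureTheory.integrable_finset_sum
      intro j _
      exact (integrable_w_mul (fun t => t ^ ((i:ℕ)+(j:ℕ))) (by continuity)).const_mul _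
  have hzero : ∫ t : ℝ, F t = 0 := by
    rw [hFval]
    have : ∀ i : Fin (q+1), ∑ j : Fin (q+1), v i * v j * G q i j
        = v i * ((G q).mulVec v i) := by
      intro i
      rw [Matrix.mulVec, dotProduct, Finset.mul_sum]
      exact Finset.sum_congr rfl fun j _ => by ring
    rw [Finset.sum_congr rfl fun i _ => this i]
    simp [hGv]
  -- F nonneg continuous with zero integral ⇒ F = 0
  have hFae : F =ᵐ[volume] 0 := by
    rw [← MeasureTheory.integral_eq_zero_iff_of_nonneg (fun t => by
      exact mul_nonneg (w_nonneg t) (sq_nonneg _)) hFint]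
    exact hzero
  have hFeq : ∀ t, F t = 0 := by
    have := hFcont.ae_eq_iff_eq volume continuous_const |>.1 hFae
    intro t; exact congrFun this t
  -- So P vanishes on Ioo 1/4 3/4
  have hProots : ∀ t ∈ Set.Ioo ((1:ℝ)/4) (3/4), P.eval t = 0 := by
    intro t ht
    have := hFeq t
    rw [hF] at this
    simp only [w_eq_one ht, one_mul] at this
    exact pow_eq_zero_iff (n := 2) (by norm_num) |>.1 this
  have hP0 : P = 0 := by
    apply Polynomial.eq_zero_of_infinite_isRoot
    have hinf : (Set.Ioo ((1:ℝ)/4) (3/4)).Infinite := Set.Ioo_infinite (by norm_num)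
    exact hinf.mono (fun t ht => hProots t ht)
  -- coefficients of P are v
  have hcoeff : ∀ k : Fin (q+1), v k = 0 := by
    intro k
    have : P.coeff (k : ℕ) = v k := by
      rw [hP, Polynomial.finset_sum_coeff]
      rw [Finset.sum_eq_single k]
      · simp
      · intro j _ hj
        simp only [Polynomial.coeff_C_mul, Polynomial.coeff_X_pow]
        rw [if_neg (by exact fun h => hj (Fin.ext h.symm))]
        ring
      · simp
    rw [← this, hP0]; simp
  exact hv (funext fun k => hcoeff k)

lemma Ginv_mul (q : ℕ) : (G q)⁻¹ * G q = 1 :=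
  Matrix.nonsing_inv_mul _ ((G_det_ne_zero q).isUnit)

def theta0 (q : ℕ) (s : ℝ) : ℝ → ℝ := fun t =>
  w t * ∑ i : Fin (q+1), ∑ j : Fin (q+1), (G q)⁻¹ j i * s ^ (j:ℕ) * t ^ (i:ℕ)

lemma integrable_theta0_mul (q : ℕ) (s : ℝ) (g : ℝ → ℝ) (hg : Continuous g) :
    Integrable (fun t => theta0 q s t * g t) := by
  have := integrable_w_mul
    (fun t => (∑ i : Fin (q+1), ∑ j : Fin (q+1), (G q)⁻¹ j i * s ^ (j:ℕ) * t ^ (i:ℕ)) * g t)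
    ((by continuity : Continuous fun t : ℝ =>
      (∑ i : Fin (q+1), ∑ j : Fin (q+1), (G q)⁻¹ j i * s ^ (j:ℕ) * t ^ (i:ℕ))).mul hg)
  simpa [theta0, mul_assoc] using this

lemma theta0_contDiff (q : ℕ) (s : ℝ) : ContDiff ℝ 1 (theta0 q s) := by
  apply w_contDiff.mul
  apply ContDiff.sum; intro i _
  apply ContDiff.sum; intro j _
  exact contDiff_const.mul (contDiff_id.pow _)

lemma theta0_zero (q : ℕ) (s : ℝ) {t : ℝ} (ht : t ∉ Set.Icc ((1:ℝ)/6) (5/6)) :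
    theta0 q s t = 0 := by
  have hw : w t = 0 := by
    by_contra h
    exact ht (w_tsupport (subset_tsupport w (by simpa using h)))
  simp [theta0, hw]

lemma moment (q : ℕ) (s : ℝ) (k : Fin (q+1)) :
    ∫ t : ℝ, theta0 q s t * t ^ (k:ℕ) = s ^ (k:ℕ) := by
  have hpt : ∀ t : ℝ, theta0 q s t * t ^ (k:ℕ) =
      ∑ i : Fin (q+1), ∑ j : Fin (q+1),
        ((G q)⁻¹ j i * s ^ (j:ℕ)) * (w t * t ^ ((i:ℕ) + (k:ℕ))) := by
    intro t
    show (w t * _) * _ = _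
    rw [Finset.mul_sum, Finset.sum_mul]
    refine Finset.sum_congr rfl fun i _ => ?_
    rw [Finset.mul_sum, Finset.sum_mul]
    refine Finset.sum_congr rfl fun j _ => ?_
    rw [pow_add]; ring
  rw [MeasureTheory.integral_congr_ae (Filter.Eventually.of_forall hpt)]
  rw [MeasureTheory.integral_finset_sum _ (fun i _ => by
    apply MeasureTheory.integrable_finset_sum
    intro j _
    exact (integrable_w_mul (fun t => t ^ ((i:ℕ)+(k:ℕ))) (by continuity)).const_mul _)]
  have : ∀ i : Fin (q+1), (∫ t : ℝ, ∑ j : Fin (q+1),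
      ((G q)⁻¹ j i * s ^ (j:ℕ)) * (w t * t ^ ((i:ℕ) + (k:ℕ))))
      = ∑ j : Fin (q+1), ((G q)⁻¹ j i * s ^ (j:ℕ)) * G q i k := by
    intro i
    rw [MeasureTheory.integral_finset_sum _ (fun j _ =>
      (integrable_w_mul (fun t => t ^ ((i:ℕ)+(k:ℕ))) (by continuity)).const_mul _)]
    refine Finset.sum_congr rfl fun j _ => ?_
    rw [MeasureTheory.integral_const_mul]; rfl
  rw [Finset.sum_congr rfl fun i _ => this i, Finset.sum_comm]
  have : ∀ j : Fin (q+1), (∑ i : Fin (q+1), ((G q)⁻¹ j i * s ^ (j:ℕ)) * G q i k)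
      = s ^ (j:ℕ) * ((G q)⁻¹ * G q) j k := by
    intro j
    rw [Matrix.mul_apply, Finset.mul_sum]
    exact Finset.sum_congr rfl fun i _ => by ring
  rw [Finset.sum_congr rfl fun j _ => this j, Ginv_mul]
  simp [Matrix.one_apply]

lemma reproduce (q : ℕ) (s : ℝ) (r : Polynomial ℝ) (hr : r.natDegree ≤ q) :
    ∫ t : ℝ, theta0 q s t * r.eval t = r.eval s := by
  have hev : ∀ x : ℝ, r.eval x = ∑ k : Fin (q+1), r.coeff k * x ^ (k:ℕ) := by
    intro x
    rw [Polynomial.eval_eq_sum_range' (Nat.lt_succ_of_le hr), ← Fin.sum_univ_eq_sum_range]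
  have hpt : ∀ t : ℝ, theta0 q s t * r.eval t
      = ∑ k : Fin (q+1), r.coeff k * (theta0 q s t * t ^ (k:ℕ)) := by
    intro t
    rw [hev t, Finset.mul_sum]
    exact Finset.sum_congr rfl fun k _ => by ring
  rw [MeasureTheory.integral_congr_ae (Filter.Eventually.of_forall hpt)]
  rw [MeasureTheory.integral_finset_sum _ (fun (k : Fin (q+1)) _ =>
    ((integrable_theta0_mul q s (fun t => t ^ (k:ℕ)) (by continuity)).const_mul
      (r.coeff (k:ℕ)) : Integrable (fun t => r.coeff (k:ℕ) * (theta0 q s t * t ^ (k:ℕ)))))]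
  rw [hev s]
  refine Finset.sum_congr rfl fun k _ => ?_
  rw [MeasureTheory.integral_const_mul, moment]

def K (q : ℕ) : ℝ := ∑ i : Fin (q+1), ∑ j : Fin (q+1), |(G q)⁻¹ j i|

lemma K_nonneg (q : ℕ) : 0 ≤ K q :=
  Finset.sum_nonneg fun _ _ => Finset.sum_nonneg fun _ _ => abs_nonneg _

lemma theta0_bound (q : ℕ) {s t : ℝ} (hs : s ∈ Set.Icc (0:ℝ) 1) (ht : t ∈ Set.Icc (0:ℝ) 1) :
    |theta0 q s t| ≤ K q * w t := by
  have h1 : |theta0 q s t| ≤ w t *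
      ∑ i : Fin (q+1), ∑ j : Fin (q+1), |(G q)⁻¹ j i * s ^ (j:ℕ) * t ^ (i:ℕ)| := by
    rw [theta0, abs_mul, abs_of_nonneg (w_nonneg t)]
    refine mul_le_mul_of_nonneg_left ?_ (w_nonneg t)
    refine le_trans (Finset.abs_sum_le_sum_abs _ _) ?_
    exact Finset.sum_le_sum fun i _ => Finset.abs_sum_le_sum_abs _ _
  refine le_trans h1 ?_
  rw [mul_comm]
  refine mul_le_mul_of_nonneg_right ?_ (w_nonneg t)
  refine Finset.sum_le_sum fun i _ => Finset.sum_le_sum fun j _ => ?_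
  rw [abs_mul, abs_mul, abs_pow, abs_pow]
  have hs1 : |s| ≤ 1 := abs_le.2 ⟨by linarith [hs.1], hs.2⟩
  have ht1 : |t| ≤ 1 := abs_le.2 ⟨by linarith [ht.1], ht.2⟩
  calc |(G q)⁻¹ j i| * |s| ^ (j:ℕ) * |t| ^ (i:ℕ)
      ≤ |(G q)⁻¹ j i| * 1 * 1 := by
        gcongr <;> [exact pow_le_one₀ (abs_nonneg _) hs1; exact pow_le_one₀ (abs_nonneg _) ht1]
    _ = |(G q)⁻¹ j i| := by ring

lemma theta0_L1 (q : ℕ) {s : ℝ} (hs : s ∈ Set.Icc (0:ℝ) 1) :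
    ∫ t in Set.Ioc (0:ℝ) 1, |theta0 q s t| ≤ K q := by
  have hint : IntegrableOn (fun t => |theta0 q s t|) (Set.Ioc (0:ℝ) 1) := by
    have : Integrable (fun t => theta0 q s t) := by
      simpa using integrable_theta0_mul q s (fun _ => 1) continuous_const
    exact this.abs.integrableOn
  have hintK : IntegrableOn (fun t => K q * w t) (Set.Ioc (0:ℝ) 1) :=
    ((integrable_w_mul (fun _ => 1) continuous_const).const_mul (K q)).integrableOn.congr_fun
      (by intro t _; simp [mul_comm]) measurableSet_Ioc
  calc ∫ t in Set.Ioc (0:ℝ) 1, |theta0 q s t|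
      ≤ ∫ t in Set.Ioc (0:ℝ) 1, K q * w t := by
        refine setIntegral_mono_on hint hintK measurableSet_Ioc fun t ht => ?_
        exact theta0_bound q hs ⟨le_of_lt ht.1, ht.2⟩
    _ ≤ ∫ t in Set.Ioc (0:ℝ) 1, K q := by
        refine setIntegral_mono_on hintK (integrableOn_const (by
          rw [Real.volume_Ioc]; exact ENNReal.ofReal_ne_top)) measurableSet_Ioc fun t _ => ?_
        calc K q * w t ≤ K q * 1 := by
              exact mul_le_mul_of_nonneg_left (w_le_one t) (K_nonneg q)
          _ = K q := mul_one _
    _ = K q := by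
        rw [setIntegral_const, measureReal_def, Real.volume_Ioc]
        norm_num



lemma integral_comp_affine (H : ℝ → ℝ) {a c : ℝ} (hc : 0 < c) :
    ∫ t : ℝ, H ((t - a) / c) = c * ∫ u : ℝ, H u := by
  have h1 : ∫ t : ℝ, H ((t - a) / c) = ∫ t : ℝ, (fun x => H (x / c)) (t + (-a)) := by
    refine integral_congr_ae (Filter.Eventually.of_forall fun t => ?_)
    simp [sub_eq_add_neg]
  rw [h1, MeasureTheory.integral_add_right_eq_self (fun x => H (x / c)) (-a),
    MeasureTheory.Measure.integral_comp_div H c, abs_of_pos hc, smul_eq_mul]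

end RTD

open RTD in
/-- Existence of the regularized Delta function in time used in Case 2 of the proof
    of Theorem 2.1: a C¹ function θ supported inside (a,b), reproducing point
    evaluation at t̃ on polynomials of degree ≤ q, with ‖θ‖_{L¹(a,b)} ≤ C where C
    depends only on q. -/
theorem regularized_time_delta_exists (q : ℕ) :
    ∃ C : ℝ, 0 < C ∧
      ∀ a b : ℝ, a < b → ∀ t' ∈ Set.Ioo a b,
        ∃ θ : ℝ → ℝ,
          ContDiff ℝ 1 θ ∧
          tsupport θ ⊆ Set.Ioo a b ∧
          (∀ p : Polynomial ℝ, p.natDegree ≤ q →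
            ∫ t in Set.Ioc a b, θ t * p.eval t = p.eval t') ∧
          (∫ t in Set.Ioc a b, |θ t|) ≤ C := by
  refine ⟨K q + 1, by linarith [K_nonneg q], ?_⟩
  intro a b hab t' ht'
  set c : ℝ := b - a with hcdef
  have hc0 : 0 < c := by simp only [hcdef]; linarith
  set s : ℝ := (t' - a) / c with hsdef
  have hs01 : s ∈ Set.Ioo (0:ℝ) 1 :=
    ⟨div_pos (by linarith [ht'.1]) hc0, (div_lt_one hc0).2 (by simp only [hcdef]; linarith [ht'.2])⟩
  have htz : ∀ t : ℝ, t ∉ Set.Ioc a b → theta0 q s ((t - a) / c) = 0 := by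
    intro t ht
    apply theta0_zero q s
    intro ⟨h1, h2⟩
    rw [le_div_iff₀ hc0] at h1
    rw [div_le_iff₀ hc0] at h2
    exact ht ⟨by linarith, by simp only [hcdef] at h2 ⊢; linarith⟩
  refine ⟨fun t => c⁻¹ * theta0 q s ((t - a) / c), ?_, ?_, ?_, ?_⟩
  · exact contDiff_const.mul ((theta0_contDiff q s).comp
      ((contDiff_id.sub contDiff_const).div_const c))
  · -- tsupport
    have hsub : Function.support (fun t => c⁻¹ * theta0 q s ((t - a) / c))
        ⊆ Set.Icc (a + c/6) (a + 5*c/6) := by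
      intro t ht
      by_contra hmem
      apply ht
      have hnot : (t - a) / c ∉ Set.Icc ((1:ℝ)/6) (5/6) := by
        intro ⟨h1, h2⟩
        apply hmem
        rw [le_div_iff₀ hc0] at h1
        rw [div_le_iff₀ hc0] at h2
        exact ⟨by linarith, by linarith⟩
      show c⁻¹ * theta0 q s ((t - a) / c) = 0
      rw [theta0_zero q s hnot, mul_zero]
    refine le_trans (closure_minimal hsub isClosed_Icc) ?_
    intro x hx
    exact ⟨by linarith [hx.1, hc0], by simp only [hcdef] at hx ⊢; linarith [hx.2, hc0]⟩
  · -- reproduction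
    intro p hp
    set pt : Polynomial ℝ := p.comp (Polynomial.C c * Polynomial.X + Polynomial.C a)
      with hptdef
    have hptdeg : pt.natDegree ≤ q := by
      refine le_trans (Polynomial.natDegree_comp_le) ?_
      rw [Polynomial.natDegree_linear hc0.ne']
      simpa using hp
    have hpt_eval : ∀ u : ℝ, pt.eval u = p.eval (c * u + a) := by
      intro u; simp [hptdef, Polynomial.eval_comp]
    show ∫ t in Set.Ioc a b, c⁻¹ * theta0 q s ((t - a) / c) * p.eval t = p.eval t'
    have key : ∀ t : ℝ, c⁻¹ * theta0 q s ((t - a) / c) * p.eval t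
        = c⁻¹ * ((fun u => theta0 q s u * pt.eval u) ((t - a) / c)) := by
      intro t
      simp only
      rw [hpt_eval, show c * ((t - a) / c) + a = t by field_simp; ring]
      ring
    rw [setIntegral_eq_integral_of_forall_compl_eq_zero
      (f := fun t => c⁻¹ * theta0 q s ((t - a) / c) * p.eval t)
      (fun t ht => by show c⁻¹ * theta0 q s ((t - a) / c) * p.eval t = 0
                      rw [htz t ht, mul_zero, zero_mul])]
    rw [MeasureTheory.integral_congr_ae (Filter.Eventually.of_forall key),
      MeasureTheory.integral_const_mul,
      integral_comp_affine (fun u => theta0 q s u * pt.eval u) hc0,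
      ← mul_assoc, inv_mul_cancel₀ hc0.ne', one_mul,
      reproduce q s pt hptdeg, hpt_eval,
      show c * s + a = t' by rw [hsdef]; field_simp; ring]
  · -- L1 bound
    show (∫ t in Set.Ioc a b, |c⁻¹ * theta0 q s ((t - a) / c)|) ≤ K q + 1
    have key : ∀ t : ℝ, |c⁻¹ * theta0 q s ((t - a) / c)|
        = c⁻¹ * ((fun u => |theta0 q s u|) ((t - a) / c)) := by
      intro t
      rw [abs_mul, abs_of_nonneg (inv_nonneg.2 hc0.le)]
    rw [setIntegral_eq_integral_of_forall_compl_eq_zero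
      (f := fun t => |c⁻¹ * theta0 q s ((t - a) / c)|)
      (fun t ht => by show |c⁻¹ * theta0 q s ((t - a) / c)| = 0
                      rw [htz t ht, mul_zero, abs_zero])]
    rw [MeasureTheory.integral_congr_ae (Filter.Eventually.of_forall key),
      MeasureTheory.integral_const_mul,
      integral_comp_affine (fun u => |theta0 q s u|) hc0,
      ← mul_assoc, inv_mul_cancel₀ hc0.ne', one_mul]
    have hz : ∀ u : ℝ, u ∉ Set.Ioc (0:ℝ) 1 → |theta0 q s u| = 0 := by
      intro u hu
      rw [theta0_zero q s (fun hIcc => hu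
        ⟨by linarith [hIcc.1], by linarith [hIcc.2]⟩), abs_zero]
    rw [← setIntegral_eq_integral_of_forall_compl_eq_zero hz]
    exact le_trans (theta0_L1 q ⟨hs01.1.le, hs01.2.le⟩) (by linarith [K_nonneg q])
end
end
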